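/- Let μ > 0, B ≥ 2 an integer, and 0 < τ_{B−1} ≤ τ_{B−2} ≤ … ≤ τ_1 < ∞. Define the B×B matrix P, with rows and columns indexed by {0,…,B−1}, by P_{j,B−1} = G_{B−j}(τ_{B−1}) and P_{j,i} = G_{1+i−j}(τ_i) − G_{2+i−j}(τ_{i+1}) for 0 ≤ i < B−1. Then all entries of P are nonnegative; moreover P_{j,i} > 0 whenever i ≥ j, and for every j ≥ 1 one has P_{j,j−1} = e^{−μ τ_j} > 0. -/

import Mathlib

/-- The Erlang CDF `G_m` with rate `μ` and (integer) stage parameter `m`: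
`G_m(t) = 1 - e^(-μt) ∑_{k=0}^{m-1} (μt)^k / k!` for `t ≥ 0` and `m ≥ 1`,
with the conventions `G_m(t) = 0` for `t < 0` and `G_m(t) = 1` for `t ≥ 0` when `m ≤ 0`. -/
noncomputable def erlangCDF (μ : ℝ) (m : ℤ) (t : ℝ) : ℝ :=
  if t < 0 then 0
  else if m ≤ 0 then 1
  else 1 - Real.exp (-(μ * t)) *
    ∑ k ∈ Finset.range m.toNat, (μ * t) ^ k / (Nat.factorial k : ℝ)

private lemma hasDerivAt_aux (n : ℕ) (x : ℝ) :
    HasDerivAt (fun y => Real.exp (-y) * ∑ k ∈ Finset.range (n+1), y ^ k / (Nat.factorial k : ℝ))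
      (-(Real.exp (-x) * (x ^ n / (Nat.factorial n : ℝ)))) x := by
  have h1 : HasDerivAt (fun y : ℝ => Real.exp (-y)) (-Real.exp (-x)) x := by
    simpa using (hasDerivAt_neg x).exp
  have h2 : HasDerivAt (fun y : ℝ => ∑ k ∈ Finset.range (n+1), y ^ k / (Nat.factorial k : ℝ))
      (∑ k ∈ Finset.range n, x ^ k / (Nat.factorial k : ℝ)) x := by
    have h := HasDerivAt.fun_sum (u := Finset.range (n+1))
      (A := fun k y => y ^ k / (Nat.factorial k : ℝ))
      (A' := fun k => (k : ℝ) * x ^ (k-1) / (Nat.factorial k : ℝ))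
      (fun k _ => ((hasDerivAt_pow k x).div_const _))
    refine h.congr_deriv (Eq.symm ?_)
    rw [Finset.sum_range_succ']
    simp only [Nat.cast_zero, zero_mul, zero_div, add_zero]
    apply Finset.sum_congr rfl
    intro k _
    rw [Nat.factorial_succ]
    have hk : (Nat.factorial k : ℝ) ≠ 0 := Nat.cast_ne_zero.2 (Nat.factorial_ne_zero k)
    push_cast
    field_simp
  have h3 := h1.fun_mul h2
  refine h3.congr_deriv (Eq.symm ?_)
  rw [Finset.sum_range_succ]
  ring

private lemma g_antitone (n : ℕ) :
    AntitoneOn (fun x => Real.exp (-x) * ∑ k ∈ Finset.range (n+1), x ^ k / (Nat.factorial k : ℝ))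
      (Set.Ici (0:ℝ)) := by
  apply antitoneOn_of_deriv_nonpos (convex_Ici 0)
  · apply Continuous.continuousOn; fun_prop
  · intro x _
    exact (hasDerivAt_aux n x).differentiableAt.differentiableWithinAt
  · intro x hx
    rw [interior_Ici] at hx
    have hx' : (0:ℝ) < x := hx
    rw [(hasDerivAt_aux n x).deriv]
    have : (0:ℝ) ≤ Real.exp (-x) * (x ^ n / (Nat.factorial n : ℝ)) := by positivity
    linarith

private lemma erlang_nonpos {μ : ℝ} {m : ℤ} {t : ℝ} (hm : m ≤ 0) (ht : 0 ≤ t) :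
    erlangCDF μ m t = 1 := by
  unfold erlangCDF
  rw [if_neg (not_lt.2 ht), if_pos hm]

private lemma erlang_of_pos {μ : ℝ} {m : ℤ} {t : ℝ} (hm : 1 ≤ m) (ht : 0 ≤ t) :
    erlangCDF μ m t = 1 - Real.exp (-(μ * t)) *
      ∑ k ∈ Finset.range m.toNat, (μ * t) ^ k / (Nat.factorial k : ℝ) := by
  unfold erlangCDF
  rw [if_neg (not_lt.2 ht), if_neg (by omega)]

private lemma erlang_le_one {μ : ℝ} (hμ : 0 ≤ μ) (m : ℤ) (t : ℝ) :
    erlangCDF μ m t ≤ 1 := by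
  unfold erlangCDF
  split_ifs with h1 h2
  · norm_num
  · exact le_refl 1
  · have ht : 0 ≤ t := not_lt.1 h1
    have hsum : 0 ≤ ∑ k ∈ Finset.range m.toNat, (μ * t) ^ k / (Nat.factorial k : ℝ) := by
      apply Finset.sum_nonneg; intro k _; positivity
    nlinarith [Real.exp_pos (-(μ * t))]

private lemma erlang_nonneg {μ : ℝ} (hμ : 0 ≤ μ) (m : ℤ) (t : ℝ) :
    0 ≤ erlangCDF μ m t := by
  unfold erlangCDF
  split_ifs with h1 h2
  · exact le_refl (0:ℝ)
  · norm_num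
  · have ht : 0 ≤ t := not_lt.1 h1
    have hx : 0 ≤ μ * t := mul_nonneg hμ ht
    have hsum := Real.sum_le_exp_of_nonneg hx m.toNat
    rw [sub_nonneg]
    calc Real.exp (-(μ * t)) * ∑ k ∈ Finset.range m.toNat, (μ * t) ^ k / (Nat.factorial k : ℝ)
        ≤ Real.exp (-(μ * t)) * Real.exp (μ * t) :=
          mul_le_mul_of_nonneg_left hsum (Real.exp_pos _).le
      _ = 1 := by rw [← Real.exp_add]; norm_num

private lemma erlang_pos {μ : ℝ} (hμ : 0 < μ) {m : ℤ} {t : ℝ} (hm : 1 ≤ m) (ht : 0 < t) :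
    0 < erlangCDF μ m t := by
  rw [erlang_of_pos hm ht.le, sub_pos]
  have hx : 0 < μ * t := mul_pos hμ ht
  have hsum := Real.sum_le_exp_of_nonneg hx.le (m.toNat + 1)
  rw [Finset.sum_range_succ] at hsum
  have hterm : 0 < (μ * t) ^ m.toNat / (Nat.factorial m.toNat : ℝ) := by positivity
  calc Real.exp (-(μ * t)) * ∑ k ∈ Finset.range m.toNat, (μ * t) ^ k / (Nat.factorial k : ℝ)
      < Real.exp (-(μ * t)) * Real.exp (μ * t) := by
        apply mul_lt_mul_of_pos_left _ (Real.exp_pos _)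
        linarith
    _ = 1 := by rw [← Real.exp_add]; norm_num

private lemma erlang_lt_one {μ : ℝ} (hμ : 0 ≤ μ) {m : ℤ} {t : ℝ} (hm : 1 ≤ m) (ht : 0 ≤ t) :
    erlangCDF μ m t < 1 := by
  rw [erlang_of_pos hm ht]
  have hN : 1 ≤ m.toNat := by omega
  have hsum : (1:ℝ) ≤ ∑ k ∈ Finset.range m.toNat, (μ * t) ^ k / (Nat.factorial k : ℝ) := by
    have h0 : ∑ k ∈ Finset.range 1, (μ * t) ^ k / (Nat.factorial k : ℝ) = 1 := by simp
    rw [← h0]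
    apply Finset.sum_le_sum_of_subset_of_nonneg (Finset.range_subset_range.2 hN)
    intro k _ _
    have : 0 ≤ μ * t := mul_nonneg hμ ht
    positivity
  nlinarith [Real.exp_pos (-(μ * t))]

private lemma erlang_anti_m {μ : ℝ} (hμ : 0 ≤ μ) {m m' : ℤ} {t : ℝ} (h : m ≤ m') (ht : 0 ≤ t) :
    erlangCDF μ m' t ≤ erlangCDF μ m t := by
  by_cases hm : m ≤ 0
  · rw [erlang_nonpos hm ht]
    exact erlang_le_one hμ m' t
  · have hm1 : 1 ≤ m := by omega
    have hm'1 : 1 ≤ m' := by omega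
    rw [erlang_of_pos hm1 ht, erlang_of_pos hm'1 ht]
    have hx : 0 ≤ μ * t := mul_nonneg hμ ht
    have hsub : ∑ k ∈ Finset.range m.toNat, (μ * t) ^ k / (Nat.factorial k : ℝ)
        ≤ ∑ k ∈ Finset.range m'.toNat, (μ * t) ^ k / (Nat.factorial k : ℝ) := by
      apply Finset.sum_le_sum_of_subset_of_nonneg (Finset.range_subset_range.2 (by omega))
      intro k _ _; positivity
    have := mul_le_mul_of_nonneg_left hsub (Real.exp_pos (-(μ * t))).le
    linarith

private lemma erlang_succ_lt {μ : ℝ} (hμ : 0 < μ) {m : ℤ} {t : ℝ} (hm : 1 ≤ m) (ht : 0 < t) :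
    erlangCDF μ (m + 1) t < erlangCDF μ m t := by
  rw [erlang_of_pos hm ht.le, erlang_of_pos (by omega) ht.le]
  have hx : 0 < μ * t := mul_pos hμ ht
  have hN : (m + 1).toNat = m.toNat + 1 := by omega
  rw [hN, Finset.sum_range_succ, mul_add]
  have : 0 < Real.exp (-(μ * t)) * ((μ * t) ^ m.toNat / (Nat.factorial m.toNat : ℝ)) := by
    positivity
  linarith

private lemma erlang_mono_t {μ : ℝ} (hμ : 0 < μ) (m : ℤ) {s t : ℝ} (hs : 0 ≤ s) (hst : s ≤ t) :
    erlangCDF μ m s ≤ erlangCDF μ m t := by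
  have ht : 0 ≤ t := hs.trans hst
  by_cases hm : m ≤ 0
  · rw [erlang_nonpos hm ht, erlang_nonpos hm hs]
  · have hm1 : 1 ≤ m := by omega
    rw [erlang_of_pos hm1 ht, erlang_of_pos hm1 hs]
    have hN : m.toNat = (m.toNat - 1) + 1 := by omega
    rw [hN]
    have h := g_antitone (m.toNat - 1) (Set.mem_Ici.2 (mul_nonneg hμ.le hs))
      (Set.mem_Ici.2 (mul_nonneg hμ.le ht))
      (mul_le_mul_of_nonneg_left hst hμ.le)
    simp only at h
    linarith

private lemma erlang_one_eq {μ : ℝ} {t : ℝ} (ht : 0 ≤ t) :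
    erlangCDF μ 1 t = 1 - Real.exp (-(μ * t)) := by
  rw [erlang_of_pos le_rfl ht]
  simp

/-- For `μ > 0`, integer `B ≥ 2` and thresholds
`0 < τ (B-1) ≤ τ (B-2) ≤ … ≤ τ 1 < ∞`, the `B × B` transition matrix `P` given by
`P j (B-1) = G_{B-j}(τ (B-1))` and `P j i = G_{1+i-j}(τ i) - G_{2+i-j}(τ (i+1))` for
`0 ≤ i < B-1` (where, for `i = 0`, the convention `τ 0 = +∞` makes the first term equal `1`)
has nonnegative entries, `P j i > 0` whenever `i ≥ j`, and for every `j ≥ 1`,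
`P j (j-1) = e^(-μ τ j) > 0`. -/
theorem transition_matrix_entries (μ : ℝ) (hμ : 0 < μ) (B : ℕ) (hB : 2 ≤ B)
    (τ : ℕ → ℝ) (hpos : 0 < τ (B - 1))
    (hmono : ∀ m, 1 ≤ m → m + 1 ≤ B - 1 → τ (m + 1) ≤ τ m)
    (P : Matrix (Fin B) (Fin B) ℝ)
    (hP : ∀ j i : Fin B, P j i =
      if (i : ℕ) = B - 1 then erlangCDF μ ((B : ℤ) - ((j : ℕ) : ℤ)) (τ (B - 1))
      else if (i : ℕ) = 0 then 1 - erlangCDF μ (2 - ((j : ℕ) : ℤ)) (τ 1)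
      else erlangCDF μ (1 + ((i : ℕ) : ℤ) - ((j : ℕ) : ℤ)) (τ (i : ℕ))
        - erlangCDF μ (2 + ((i : ℕ) : ℤ) - ((j : ℕ) : ℤ)) (τ ((i : ℕ) + 1))) :
    (∀ j i : Fin B, 0 ≤ P j i) ∧
    (∀ j i : Fin B, (j : ℕ) ≤ (i : ℕ) → 0 < P j i) ∧
    (∀ j : Fin B, 1 ≤ (j : ℕ) →
      P j ⟨(j : ℕ) - 1, lt_of_le_of_lt (Nat.sub_le _ _) j.isLt⟩
          = Real.exp (-(μ * τ (j : ℕ))) ∧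
        0 < Real.exp (-(μ * τ (j : ℕ)))) := by
  -- chain: τ a ≥ τ (B-1) > 0 for 1 ≤ a ≤ B-1
  have key : ∀ d a, 1 ≤ a → a + d = B - 1 → τ (B - 1) ≤ τ a := by
    intro d
    induction d with
    | zero =>
      intro a ha h
      have : a = B - 1 := by omega
      rw [this]
    | succ d ih =>
      intro a ha h
      have h1 : τ (a + 1) ≤ τ a := hmono a ha (by omega)
      have h2 : τ (B - 1) ≤ τ (a + 1) := ih (a + 1) (by omega) (by omega)
      linarith
  have tau_pos : ∀ a, 1 ≤ a → a ≤ B - 1 → 0 < τ a := by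
    intro a ha hab
    exact lt_of_lt_of_le hpos (key (B - 1 - a) a ha (by omega))
  refine ⟨?_, ?_, ?_⟩
  · -- nonnegativity
    intro j i
    rw [hP]
    by_cases h1 : (i : ℕ) = B - 1
    · rw [if_pos h1]
      exact erlang_nonneg hμ.le _ _
    · rw [if_neg h1]
      by_cases h0 : (i : ℕ) = 0
      · rw [if_pos h0]
        linarith [erlang_le_one hμ.le (2 - ((j : ℕ) : ℤ)) (τ 1)]
      · rw [if_neg h0]
        have hiB := i.isLt
        have hi1 : 1 ≤ (i : ℕ) := by omega
        have hi2 : (i : ℕ) + 1 ≤ B - 1 := by omega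
        have ht1 : 0 < τ (i : ℕ) := tau_pos _ hi1 (by omega)
        have ht2 : 0 < τ ((i : ℕ) + 1) := tau_pos _ (by omega) hi2
        have hst : τ ((i : ℕ) + 1) ≤ τ (i : ℕ) := hmono _ hi1 hi2
        have c1 : erlangCDF μ (2 + ((i : ℕ) : ℤ) - ((j : ℕ) : ℤ)) (τ ((i : ℕ) + 1))
            ≤ erlangCDF μ (2 + ((i : ℕ) : ℤ) - ((j : ℕ) : ℤ)) (τ (i : ℕ)) :=
          erlang_mono_t hμ _ ht2.le hst
        have c2 : erlangCDF μ (2 + ((i : ℕ) : ℤ) - ((j : ℕ) : ℤ)) (τ (i : ℕ))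
            ≤ erlangCDF μ (1 + ((i : ℕ) : ℤ) - ((j : ℕ) : ℤ)) (τ (i : ℕ)) :=
          erlang_anti_m hμ.le (by omega) ht1.le
        linarith
  · -- positivity on/above the diagonal
    intro j i hji
    rw [hP]
    by_cases h1 : (i : ℕ) = B - 1
    · rw [if_pos h1]
      have hjB := j.isLt
      exact erlang_pos hμ (by omega) hpos
    · rw [if_neg h1]
      by_cases h0 : (i : ℕ) = 0
      · rw [if_pos h0]
        have hj0 : ((j : ℕ) : ℤ) = 0 := by omega
        rw [hj0]
        have ht1 : 0 < τ 1 := tau_pos 1 le_rfl (by omega)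
        have := erlang_lt_one hμ.le (m := 2 - 0) (by norm_num) ht1.le
        linarith
      · rw [if_neg h0]
        have hiB := i.isLt
        have hi1 : 1 ≤ (i : ℕ) := by omega
        have hi2 : (i : ℕ) + 1 ≤ B - 1 := by omega
        have ht1 : 0 < τ (i : ℕ) := tau_pos _ hi1 (by omega)
        have ht2 : 0 < τ ((i : ℕ) + 1) := tau_pos _ (by omega) hi2
        have hst : τ ((i : ℕ) + 1) ≤ τ (i : ℕ) := hmono _ hi1 hi2
        have c1 : erlangCDF μ (2 + ((i : ℕ) : ℤ) - ((j : ℕ) : ℤ)) (τ ((i : ℕ) + 1))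
            ≤ erlangCDF μ (2 + ((i : ℕ) : ℤ) - ((j : ℕ) : ℤ)) (τ (i : ℕ)) :=
          erlang_mono_t hμ _ ht2.le hst
        have hm1 : (1 : ℤ) ≤ 1 + ((i : ℕ) : ℤ) - ((j : ℕ) : ℤ) := by omega
        have hre : (2 + ((i : ℕ) : ℤ) - ((j : ℕ) : ℤ))
            = (1 + ((i : ℕ) : ℤ) - ((j : ℕ) : ℤ)) + 1 := by ring
        have c2 : erlangCDF μ (2 + ((i : ℕ) : ℤ) - ((j : ℕ) : ℤ)) (τ (i : ℕ))
            < erlangCDF μ (1 + ((i : ℕ) : ℤ) - ((j : ℕ) : ℤ)) (τ (i : ℕ)) := by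
          rw [hre]
          exact erlang_succ_lt hμ hm1 ht1
        linarith
  · -- subdiagonal entries
    intro j hj
    refine ⟨?_, Real.exp_pos _⟩
    rw [hP]
    have hjB := j.isLt
    simp only [Fin.val_mk]
    have hne1 : ¬ ((j : ℕ) - 1 = B - 1) := by omega
    rw [if_neg hne1]
    by_cases hj1 : (j : ℕ) = 1
    · rw [if_pos (by omega)]
      have e : (2 - ((j : ℕ) : ℤ)) = 1 := by omega
      rw [e, hj1, erlang_one_eq (tau_pos 1 le_rfl (by omega)).le]
      ring
    · rw [if_neg (by omega)]
      have e1 : (1 + (((j : ℕ) - 1 : ℕ) : ℤ) - ((j : ℕ) : ℤ)) = 0 := by omega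
      have e2 : (2 + (((j : ℕ) - 1 : ℕ) : ℤ) - ((j : ℕ) : ℤ)) = 1 := by omega
      have e3 : (j : ℕ) - 1 + 1 = (j : ℕ) := by omega
      rw [e1, e2, e3, erlang_nonpos le_rfl (tau_pos _ (by omega) (by omega)).le,
        erlang_one_eq (tau_pos _ hj (by omega)).le]
      ring
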